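/- arXiv:math/0107054 — 2 statements merged into one kernel-verified Lean document; each statement's English description precedes it below -/
import Mathlib

section
/- The family of characters χ^{(N)}_{k,l;b}(q,z), indexed by N = 0, 1, 2, ... and by admissible boundary vectors b, is the unique solution of the recursion equations χ^{(N+1)}_{k,l;(b_0,...,b_{l-2})}(q,z) = Σ_{i=0}^{b_0} z^i · χ^{(N)}_{k,l;(b_1−i, b_2−i, ..., b_{l-2}−i, k−i)}(q, qz) with the initial condition χ^{(0)}_{k,l;b}(q,z) = 1 for all b. -/
open Finset Filter MvPowerSeries

noncomputable section

/-- Formal power series in two variables `q` (index 0) and `z` (index 1). -/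
abbrev PS : Type := MvPowerSeries (Fin 2) ℂ

/-- The variable `q`. -/
def Qv : PS := MvPowerSeries.X 0
/-- The variable `z`. -/
def Zv : PS := MvPowerSeries.X 1

/-- Build a power series from its coefficient function. -/
def ofCoeff (c : (Fin 2 →₀ ℕ) → ℂ) : PS := c

/-- The exponent `q^a z^c`. -/
def idx2 (a c : ℕ) : Fin 2 →₀ ℕ := Finsupp.single 0 a + Finsupp.single 1 c

/-- The q-shift operator `(S g)(q,z) = g(q,qz)`. -/
def Sop (f : PS) : PS :=
  ofCoeff fun e => if e 1 ≤ e 0 then MvPowerSeries.coeff (idx2 (e 0 - e 1) (e 1)) f else 0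

/-- The window condition for `(k,l)`-configurations: `x_j + ... + x_{j+l-1} ≤ k`. -/
def windowOK (k l : ℕ) (x : ℕ → ℕ) : Prop := ∀ j, ∑ t ∈ Finset.range l, x (j + t) ≤ k

/-- The boundary condition: `x_0 + ... + x_i ≤ b_i` for `0 ≤ i ≤ l-2`. -/
def boundOK (l : ℕ) (b : ℕ → ℕ) (x : ℕ → ℕ) : Prop :=
  ∀ i, i < l - 1 → ∑ t ∈ Finset.range (i + 1), x t ≤ b i

/-- Admissible boundary vectors: `b_0 ≤ b_1 ≤ ... ≤ b_{l-2} ≤ k`. -/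
def AdmB (k l : ℕ) (b : ℕ → ℕ) : Prop :=
  (∀ i j, i ≤ j → j < l - 1 → b i ≤ b j) ∧ ∀ i, i < l - 1 → b i ≤ k

/-- The character `χ^{(N)}_{k,l;b}(q,z)`: the coefficient of `q^a z^m` counts
`(k,l)`-configurations of length at most `N` obeying the boundary conditions,
with `Σ j·x_j = a` and `Σ x_j = m`. -/
def chiN (k l N : ℕ) (b : ℕ → ℕ) : PS :=
  ofCoeff fun e => (Nat.card {x : ℕ → ℕ //
    windowOK k l x ∧ boundOK l b x ∧ (∀ i, N ≤ i → x i = 0) ∧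
    ∑ j ∈ Finset.range N, j * x j = e 0 ∧ ∑ j ∈ Finset.range N, x j = e 1} : ℂ)

/-- The limit character `χ^{(∞)}_{k,l;b}(q,z)`. -/
def chiInf (k l : ℕ) (b : ℕ → ℕ) : PS :=
  ofCoeff fun e => (Nat.card {x : ℕ → ℕ //
    windowOK k l x ∧ boundOK l b x ∧ (∀ i, e 0 + 1 ≤ i → x i = 0) ∧
    ∑ j ∈ Finset.range (e 0 + 1), j * x j = e 0 ∧
    ∑ j ∈ Finset.range (e 0 + 1), x j = e 1} : ℂ)

/-- The shifted boundary vector `(b_1 - i, ..., b_{l-2} - i, k - i)`. -/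
def shiftB (k l : ℕ) (b : ℕ → ℕ) (i : ℕ) : ℕ → ℕ :=
  fun j => if j + 1 ≤ l - 2 then b (j + 1) - i else k - i

/-- The monomial `q^{p.1} z^{p.2}`. -/
def monoPS (p : ℕ × ℕ) : PS := Qv ^ p.1 * Zv ^ p.2

/-- Exponents in the bracket `[P_1,...,P_l] = P_1^{b_0} P_2^{b_1-b_0} ⋯ P_l^{k-b_{l-2}}`. -/
def bexp (l k : ℕ) (b : ℕ → ℕ) (i : ℕ) : ℕ :=
  if i = 0 then b 0 else if i = l - 1 then k - b (l - 2) else b i - b (i - 1)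

/-- The bracket `[P_1,...,P_l]` as a function of the boundary vector `b`. -/
def bracket (l k : ℕ) (P : ℕ → ℕ × ℕ) (b : ℕ → ℕ) : PS :=
  ∏ i ∈ Finset.range l, monoPS (P i) ^ bexp l k b i

/-- q-exponent pattern of the tuples in the list defining `V_l`
(`r` of the entries carry a factor `z`; `c 0 = 0`). -/
def patQ (l r : ℕ) (c : ℕ → ℕ) (j : ℕ) : ℕ := if j < r then c (l - r + j) else c (j - r)

/-- z-exponent pattern of the tuples in the list defining `V_l`. -/
def patZ (r j : ℕ) : ℕ := if j < r then 1 else 0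

/-- The tuples `(P_1,...,P_l)` appearing in the definition of `V_l`, namely
`q^{mk} z^{nk}[q^{c_{l-r}}z, …, q^{c_{l-1}}z, 1, q^{c_1}, …, q^{c_{l-1-r}}]`
with the common factor `q^m z^n` distributed over the entries. -/
def SimpleTuple (l : ℕ) (P : ℕ → ℕ × ℕ) : Prop :=
  ∃ m n r : ℕ, r < l ∧ ∃ c : ℕ → ℕ, c 0 = 0 ∧ Monotone c ∧
    ∀ j, j < l → P j = (m + patQ l r c j, n + patZ r j)

/-- Admissible boundary data. -/
def Adm (k l : ℕ) : Type := {b : ℕ → ℕ // AdmB k l b}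

/-- The ambient space of functions of `b` with values in power series; `V_l` is a
subspace of it. -/
abbrev VV (k l : ℕ) : Type := Adm k l → PS

/-- The simple vector `f(q,z)·[P_1,...,P_l]`. -/
def simpleVal (k l : ℕ) (f : PS) (P : ℕ → ℕ × ℕ) : VV k l := fun b => f * bracket l k P b.val

/-- The space `V_l`, spanned by simple vectors. -/
def Vspan (k l : ℕ) : Submodule ℂ (VV k l) :=
  Submodule.span ℂ {v | ∃ f P, SimpleTuple l P ∧ v = simpleVal k l f P}

/-- Power series expansion of `1/(1 - q^{w.1} z^{w.2})` where `w` may have negative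
exponents, in which case `1/(1-u) = -Σ_{n≥1} u^{-n}` is used. -/
def geomPS : ℤ × ℤ → PS := fun w =>
  if 0 ≤ w.1 ∧ 0 ≤ w.2 then
    ofCoeff fun e => ({n : ℕ | (n : ℤ) * w.1 = (e 0 : ℤ) ∧ (n : ℤ) * w.2 = (e 1 : ℤ)}.ncard : ℂ)
  else
    ofCoeff fun e =>
      -({n : ℕ | 0 < n ∧ (n : ℤ) * w.1 = -(e 0 : ℤ) ∧ (n : ℤ) * w.2 = -(e 1 : ℤ)}.ncard : ℂ)

/-- Exponents of `S(q^{-1} z P_l / P_1)`. -/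
def wExpA (l : ℕ) (P : ℕ → ℕ × ℕ) : ℤ × ℤ :=
  (((P (l-1)).1 : ℤ) + ((P (l-1)).2 : ℤ) - ((P 0).1 : ℤ) - ((P 0).2 : ℤ),
   ((P (l-1)).2 : ℤ) + 1 - ((P 0).2 : ℤ))

/-- The q-shift of a monomial: `S(q^e z^d) = q^{e+d} z^d`. -/
def Smono (p : ℕ × ℕ) : ℕ × ℕ := (p.1 + p.2, p.2)

/-- The tuple `(S P_1, S P_1, S P_2, ..., S P_{l-1})` produced by the operator `A`. -/
def tupA (P : ℕ → ℕ × ℕ) : ℕ → ℕ × ℕ := fun j => if j = 0 then Smono (P 0) else Smono (P (j - 1))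

/-- The tuple `(S(q^{-1} z P_l), S P_1, ..., S P_{l-1})` produced by the operator `B`. -/
def tupB (l : ℕ) (P : ℕ → ℕ × ℕ) : ℕ → ℕ × ℕ :=
  fun j => if j = 0 then ((P (l-1)).1 + (P (l-1)).2, (P (l-1)).2 + 1) else Smono (P (j - 1))

/-- Defining property of the operator `A`:
`A(f[P_1,…,P_l]) = S(f/(1 - q^{-1}zP_l/P_1)·[P_1,P_1,P_2,…,P_{l-1}])`. -/
def HypA (k l : ℕ) (A : Module.End ℂ (VV k l)) : Prop :=
  ∀ f P, SimpleTuple l P →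
    A (simpleVal k l f P) = simpleVal k l (Sop f * geomPS (wExpA l P)) (tupA P)

/-- Defining property of the operator `B`:
`B(f[P_1,…,P_l]) = S(f/(1 - q z^{-1}P_1/P_l)·[q^{-1}zP_l,P_1,…,P_{l-1}])`. -/
def HypB (k l : ℕ) (B : Module.End ℂ (VV k l)) : Prop :=
  ∀ f P, SimpleTuple l P →
    B (simpleVal k l f P) =
      simpleVal k l (Sop f * geomPS (-(wExpA l P).1, -(wExpA l P).2)) (tupB l P)

/-- The vector `v_ini = [1,...,1]`. -/
def vini (k l : ℕ) : VV k l := simpleVal k l 1 (fun _ => (0, 0))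

/-- `(z)_n = Π_{i=0}^{n-1} (1 - q^i z)`. -/
def pochZ (n : ℕ) : PS := ∏ i ∈ Finset.range n, (1 - Qv ^ i * Zv)
/-- `(q)_t = Π_{i=1}^{t} (1 - q^i)`. -/
def pochQ (t : ℕ) : PS := ∏ i ∈ Finset.range t, (1 - Qv ^ (i + 1))
/-- `(q^t z)_∞ = Π_{i≥0} (1 - q^{t+i} z)`, defined coefficientwise. -/
def pochInfQZ (t : ℕ) : PS :=
  ofCoeff fun e =>
    MvPowerSeries.coeff e (∏ i ∈ Finset.range (e 0 + 1), (1 - Qv ^ (t + i) * Zv))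
/-- `(z)_∞ = Π_{i≥0} (1 - q^i z)`. -/
def pochInfZ : PS := pochInfQZ 0

/-- The vector `v_∞ = [1,...,1]/(z)_∞`. -/
def vinf (k l : ℕ) : VV k l := simpleVal k l pochInfZ⁻¹ (fun _ => (0, 0))

/-- Application of a monomial (word) in the operators `A` (letter `true`) and
`B` (letter `false`) to a vector; the leftmost letter acts last read, i.e.
`C_1 C_2 ⋯ C_m v = C_1 (C_2 (⋯ (C_m v)))`. -/
def wact (k l : ℕ) (A B : Module.End ℂ (VV k l)) (w : List Bool) (v : VV k l) : VV k l :=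
  w.foldr (fun c u => if c then A u else B u) v

/-- A good monomial: `C_i = A` implies `C_{i+l-1} = A` (letters 0-indexed, `true = A`). -/
def GoodWord (l : ℕ) (w : List Bool) : Prop :=
  ∀ i, i + (l - 1) < w.length → w.getD i true = true → w.getD (i + (l - 1)) true = true

/-- Canonical representative of an equivalence class of monomials: no trailing `A`s. -/
def Reduced (w : List Bool) : Prop := w = [] ∨ w.getLast? = some false

/-- Symbols for marked vertices: `•`, `∘`, `×`. -/
inductive MSym : Type
  | dot | circ | mark
  deriving DecidableEq

/-- The `A`-arrow on (possibly marked) vertices. -/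
def stepA : List MSym → List MSym
  | MSym.circ :: J => J ++ [MSym.circ]
  | MSym.dot :: _ :: J => MSym.dot :: (J ++ [MSym.circ])
  | MSym.mark :: MSym.dot :: J => MSym.dot :: (J ++ [MSym.circ])
  | MSym.mark :: MSym.circ :: J => MSym.mark :: (J ++ [MSym.circ])
  | MSym.mark :: MSym.mark :: J => MSym.dot :: (J ++ [MSym.circ])
  | v => v

/-- The `B`-arrow on (possibly marked) vertices: rotation. -/
def stepB : List MSym → List MSym
  | [] => []
  | x :: J => J ++ [x]

/-- The marked path of the monomial `w` (extended by `A`s at positions beyond its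
length), starting from `[•,…,•,×]`; `mstate l w t` is the vertex after `t` arrows. -/
def mstate (l : ℕ) (w : List Bool) : ℕ → List MSym
  | 0 => List.replicate (l - 1) MSym.dot ++ [MSym.mark]
  | t + 1 => (if w.getD t true then stepA else stepB) (mstate l w t)

/-- The `t`-th vertex of the marked path has the form `[× • J]`, i.e. the `t`-th
arrow is of type (i) or (ii). -/
def CSrc (l : ℕ) (w : List Bool) (t : ℕ) : Prop :=
  (mstate l w t).getD 0 MSym.circ = MSym.mark ∧ (mstate l w t).getD 1 MSym.circ = MSym.dot

/-- `(N A K, N B K)` is a cancellation pair: `N A K` is good and the displayed `A`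
is its cancellation `A`-arrow (the last arrow of type (i) or (ii)). -/
def CancelPair (l : ℕ) (N K : List Bool) : Prop :=
  GoodWord l (N ++ true :: K) ∧ CSrc l (N ++ true :: K) N.length ∧
    ∀ t, N.length < t → ¬ CSrc l (N ++ true :: K) t

/-- `w` is good and has a cancellation `A`-arrow. -/
def HasCA (l : ℕ) (w : List Bool) : Prop :=
  GoodWord l w ∧ ∃ t, w.getD t true = true ∧ CSrc l w t ∧ ∀ t', t < t' → ¬ CSrc l w t'

/-- `w` is good and has a cancellation `B`-arrow. -/
def HasCB (l : ℕ) (w : List Bool) : Prop :=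
  GoodWord l w ∧ ∃ t, w.getD t true = false ∧ CSrc l w t ∧ ∀ t', t < t' → ¬ CSrc l w t'

/-- The index of the cancellation arrow. -/
def cancelIdx (l : ℕ) (w : List Bool) : ℕ :=
  sInf {t | CSrc l w t ∧ ∀ t', t < t' → ¬ CSrc l w t'}

/-- Flip the letter at the cancellation arrow. -/
def flipCancel (l : ℕ) (w : List Bool) : List Bool :=
  (w ++ List.replicate (cancelIdx l w + 1 - w.length) true).set (cancelIdx l w) false

/-- The lattice `Λ` is `ℕ → ℤ` supported on `{0,…,l-1}`; coordinates `0,…,l-2`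
are the generators `b_0,…,b_{l-2}` and coordinate `l-1` is the generator `k`.
`Ma` is the map `M_a`: `b_i ↦ b_{i+1}` (`i ≤ l-3`), `b_{l-2} ↦ k`, `k ↦ k`. -/
def Ma (l : ℕ) (v : ℕ → ℤ) : ℕ → ℤ := fun j =>
  if j = 0 then 0
  else if j = l - 1 then v (l - 2) + v (l - 1)
  else if j < l - 1 then v (j - 1)
  else 0

/-- The map `M_b`: `b_i ↦ b_{i+1} - b_0` (`i ≤ l-3`), `b_{l-2} ↦ k - b_0`, `k ↦ k`. -/
def Mb (l : ℕ) (v : ℕ → ℤ) : ℕ → ℤ := fun j =>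
  if j = 0 then -(∑ i ∈ Finset.range (l - 1), v i)
  else if j = l - 1 then v (l - 2) + v (l - 1)
  else if j < l - 1 then v (j - 1)
  else 0

/-- The representative `ī ∈ {1,…,l}` of `i` modulo `l`. -/
def ibar (l : ℕ) (i : ℤ) : ℕ := ((i - 1) % (l : ℤ)).toNat + 1

/-- `ι_{i,j} = b_{ī-2} - b_{j̄-2} + k·δ(ī ≤ j̄)` (with `b_{-1} = 0`). -/
def iotaL (l : ℕ) (i j : ℤ) : ℕ → ℤ := fun t =>
  (if 2 ≤ ibar l i ∧ t = ibar l i - 2 then 1 else 0)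
  - (if 2 ≤ ibar l j ∧ t = ibar l j - 2 then 1 else 0)
  + (if ibar l i ≤ ibar l j ∧ t = l - 1 then 1 else 0)

/-- `M_{c_1} ∘ ⋯ ∘ M_{c_m}` applied to `v`, where `c_i = a` if the `i`-th letter is
`A` (`true`) and `c_i = b` otherwise. -/
def applyWord (l : ℕ) (w : List Bool) (v : ℕ → ℤ) : ℕ → ℤ :=
  w.foldr (fun c u => if c then Ma l u else Mb l u) v

/-- The extremal configuration of the monomial `w`:
`x_i = 0` if `C_{i+1} = A` and `x_i = M_{c_1} ∘ ⋯ ∘ M_{c_i}(b_0)` if `C_{i+1} = B`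
(entries beyond the length of `w` are `0`, matching equivalence of configurations). -/
def xconf (l : ℕ) (w : List Bool) (i : ℕ) : ℕ → ℤ :=
  if w.getD i true = true then 0 else applyWord l (w.take i) (iotaL l 2 1)

/-- The `A`-arrow of the summation graph (vertices as arrays of `•` = `true`,
`∘` = `false`). -/
def vstepA : List Bool → List Bool
  | false :: J => J ++ [false]
  | true :: _ :: J => true :: (J ++ [false])
  | v => v

/-- The `B`-arrow of the summation graph: rotation. -/
def vstepB : List Bool → List Bool
  | [] => []
  | x :: J => J ++ [x]

/-- The path associated with `w` in the summation graph, starting from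
`I_top = [•,…,•]`; `vstate l w t` is the vertex `I^{(t)}`. -/
def vstate (l : ℕ) (w : List Bool) (t : ℕ) : List Bool :=
  (w.take t).foldl (fun v c => if c then vstepA v else vstepB v) (List.replicate l true)

/-- The evolution of the vector part of a simple vector under one operator. -/
def tupStep (l : ℕ) (c : Bool) (P : ℕ → ℕ × ℕ) : ℕ → ℕ × ℕ :=
  if c then tupA P else tupB l P

/-- The vector part of `M v_∞` for a word `M`. -/
def wordTuple (l : ℕ) : List Bool → ℕ → ℕ × ℕ
  | [] => fun _ => (0, 0)
  | c :: w => tupStep l c (wordTuple l w)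

/-- The scalar part of `M v_∞` for a word `M`. -/
def wordScalar (l : ℕ) : List Bool → PS
  | [] => pochInfZ⁻¹
  | c :: w =>
      Sop (wordScalar l w) *
        (if c then geomPS (wExpA l (wordTuple l w))
         else geomPS (-(wExpA l (wordTuple l w)).1, -(wExpA l (wordTuple l w)).2))

/-- A cancellation block `𝔹_s = C_1 ⋯ C_{l+s}` with `C_1 = C_{s+2} = C_l = B`,
`C_2 = ⋯ = C_{s+1} = A`, `C_{l+1} = ⋯ = C_{l+s} = A` (0-indexed positions). -/
def IsBlock (l s : ℕ) (w : List Bool) : Prop :=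
  s ≤ l - 2 ∧ w.length = l + s ∧
  w.getD 0 true = false ∧ w.getD (s + 1) true = false ∧ w.getD (l - 1) true = false ∧
  (∀ i, 1 ≤ i → i ≤ s → w.getD i true = true) ∧
  (∀ i, l ≤ i → i < l + s → w.getD i true = true)

/-- The block `𝔼_i = C_2 ⋯ C_l` where `C_j = B` iff `j ∈ {σ(1),…,σ(i)}`
(1-based values of the permutation; `true = A`, `false = B`). -/
def Eblock (l : ℕ) (σ : Equiv.Perm (Fin l)) (i : ℕ) : List Bool :=
  (List.range (l - 1)).map fun t => decide (∀ a : Fin l, (a : ℕ) < i → (σ a : ℕ) ≠ t + 1)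

/-- The word `𝔼_{l-2}^{n_{l-2}} ⋯ 𝔼_1^{n_1}`. -/
def coreWord (l : ℕ) (σ : Equiv.Perm (Fin l)) (n : ℕ → ℤ) : List Bool :=
  (((List.range (l - 2)).reverse.map fun i' =>
    (List.replicate (n (i' + 1)).toNat (Eblock l σ (i' + 1))).flatten)).flatten

/-- The word `B^{n_{l-1}} 𝔼_{l-2}^{n_{l-2}} ⋯ 𝔼_1^{n_1}`; for `n_{l-1} < 0` the
first `-n_{l-1}` letters (which are `B`s) are removed instead. -/
def theWord (l : ℕ) (σ : Equiv.Perm (Fin l)) (n : ℕ → ℤ) : List Bool :=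
  if 0 ≤ n (l - 1) then List.replicate (n (l - 1)).toNat false ++ coreWord l σ n
  else (coreWord l σ n).drop (-(n (l - 1))).toNat

/-- `σ(1) = l` and `σ(l) = 1` (in 1-based notation). -/
def SigmaCond (l : ℕ) (σ : Equiv.Perm (Fin l)) : Prop :=
  (∀ a : Fin l, (a : ℕ) = 0 → (σ a : ℕ) = l - 1) ∧
  (∀ a : Fin l, (a : ℕ) = l - 1 → (σ a : ℕ) = 0)

/-- The conditions on `n = (n_1,…,n_{l-1})`: `n_i ≥ 0` for `i ≤ l-2`,
`n_{l-1} ≥ 2 - σ(l-1)`, `n_i > 0` whenever `σ(i) < σ(i+1)`; the unused entries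
are normalized to `0`. -/
def NCond (l : ℕ) (σ : Equiv.Perm (Fin l)) (n : ℕ → ℤ) : Prop :=
  (∀ i, 1 ≤ i → i ≤ l - 2 → 0 ≤ n i) ∧
  (∀ a : Fin l, (a : ℕ) = l - 2 → (2 : ℤ) - (((σ a : ℕ) : ℤ) + 1) ≤ n (l - 1)) ∧
  (∀ i, 1 ≤ i → i ≤ l - 1 → ∀ a b : Fin l, (a : ℕ) = i - 1 → (b : ℕ) = i →
      (σ a : ℕ) < (σ b : ℕ) → 0 < n i) ∧
  (∀ i, i = 0 ∨ l - 1 < i → n i = 0)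

end

section Aux

open Finset

/-- The configuration predicate underlying `chiN`. -/
def Pcond (k l N : ℕ) (b : ℕ → ℕ) (a c : ℕ) (x : ℕ → ℕ) : Prop :=
  windowOK k l x ∧ boundOK l b x ∧ (∀ i, N ≤ i → x i = 0) ∧
    ∑ j ∈ Finset.range N, j * x j = a ∧ ∑ j ∈ Finset.range N, x j = c

lemma coeff_chiN (k l N : ℕ) (b : ℕ → ℕ) (e : Fin 2 →₀ ℕ) :
    MvPowerSeries.coeff e (chiN k l N b) =
      (Nat.card {x : ℕ → ℕ // Pcond k l N b (e 0) (e 1) x} : ℂ) := rfl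

lemma coeff_Sop (f : PS) (e : Fin 2 →₀ ℕ) :
    MvPowerSeries.coeff e (Sop f) =
      if e 1 ≤ e 0 then MvPowerSeries.coeff (idx2 (e 0 - e 1) (e 1)) f else 0 := rfl

lemma idx2_0 (a c : ℕ) : idx2 a c 0 = a := by
  simp [idx2, Finsupp.single_apply]

lemma idx2_1 (a c : ℕ) : idx2 a c 1 = c := by
  simp [idx2, Finsupp.single_apply]

lemma pcond_finite (k l N : ℕ) (hl : 1 ≤ l) (b : ℕ → ℕ) (a c : ℕ) :
    Finite {x : ℕ → ℕ // Pcond k l N b a c x} := by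
  have key : ∀ (x : ℕ → ℕ), windowOK k l x → ∀ j, x j ≤ k := by
    intro x hx j
    have h1 := hx j
    have h2 : x (j + 0) ≤ ∑ t ∈ Finset.range l, x (j + t) :=
      Finset.single_le_sum (f := fun t => x (j + t)) (fun t _ => Nat.zero_le _)
        (Finset.mem_range.2 hl)
    simpa using le_trans h2 h1
  apply Finite.of_injective (f := fun (x : {x : ℕ → ℕ // Pcond k l N b a c x}) =>
    (fun j : Fin N => (⟨x.1 j, Nat.lt_succ_of_le (key x.1 x.2.1 j)⟩ : Fin (k+1))))
  intro x y hxy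
  ext j
  rcases lt_or_ge j N with hj | hj
  · exact congrArg Fin.val (congrFun hxy ⟨j, hj⟩)
  · rw [x.2.2.2.1 j hj, y.2.2.2.1 j hj]

lemma nat_card_fiber_sum {α : Type} [Finite α] (f : α → ℕ) (n : ℕ) (h : ∀ a, f a < n) :
    Nat.card α = ∑ i ∈ Finset.range n, Nat.card {a : α // f a = i} := by
  classical
  cases nonempty_fintype α
  rw [Nat.card_eq_fintype_card, Fintype.card,
    Finset.card_eq_sum_card_fiberwise (fun a _ => Finset.mem_range.2 (h a))]
  refine Finset.sum_congr rfl fun i _ => ?_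
  rw [Nat.card_eq_fintype_card, Fintype.card_subtype]

/-- Prepend a value to a configuration. -/
def consF (i : ℕ) (y : ℕ → ℕ) : ℕ → ℕ
  | 0 => i
  | j + 1 => y j

lemma tail_cond {k l N : ℕ} {b : ℕ → ℕ} {e0 e1 i : ℕ} (hl : 2 ≤ l) {x : ℕ → ℕ}
    (hx : Pcond k l (N+1) b e0 e1 x) (hx0 : x 0 = i) :
    Pcond k l N (shiftB k l b i) (e0 - (e1 - i)) (e1 - i) (fun j => x (j+1)) ∧
      i ≤ e1 ∧ e1 - i ≤ e0 := by
  obtain ⟨hw, hbd, hz, hq, hs⟩ := hx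
  have hsum : ∀ n, ∑ t ∈ range (n+1), x t = (∑ t ∈ range n, x (t+1)) + i := by
    intro n; rw [Finset.sum_range_succ' x n, hx0]
  have hs' : (∑ t ∈ range N, x (t+1)) + i = e1 := by rw [← hsum]; exact hs
  have hq' : (∑ t ∈ range N, t * x (t+1)) + (∑ t ∈ range N, x (t+1)) = e0 := by
    have h1 := Finset.sum_range_succ' (fun t => t * x t) N
    simp only [Nat.zero_mul, Nat.add_zero] at h1
    have h2 : ∑ t ∈ range N, (t+1) * x (t+1)
        = (∑ t ∈ range N, t * x (t+1)) + (∑ t ∈ range N, x (t+1)) := by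
      rw [← Finset.sum_add_distrib]
      exact Finset.sum_congr rfl fun t _ => by ring
    rw [h1, h2] at hq
    exact hq
  have hwy : windowOK k l (fun j => x (j+1)) := by
    intro j
    show ∑ t ∈ range l, x (j + t + 1) ≤ k
    calc ∑ t ∈ range l, x (j + t + 1) = ∑ t ∈ range l, x (j + 1 + t) :=
          Finset.sum_congr rfl fun t _ => by rw [Nat.add_right_comm]
      _ ≤ k := hw (j+1)
  have hby : boundOK l (shiftB k l b i) (fun j => x (j+1)) := by
    intro j hj
    show ∑ t ∈ range (j+1), x (t+1) ≤ shiftB k l b i j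
    have key := hsum (j+1)
    by_cases hc : j + 1 ≤ l - 2
    · have h1 : ∑ t ∈ range (j+1+1), x t ≤ b (j+1) := hbd (j+1) (by omega)
      have h3 : shiftB k l b i j = b (j+1) - i := by unfold shiftB; rw [if_pos hc]
      omega
    · have h1 := hw 0
      simp only [Nat.zero_add] at h1
      have hl2 : j + 1 + 1 = l := by omega
      rw [hl2] at key
      have h3 : shiftB k l b i j = k - i := by unfold shiftB; rw [if_neg hc]
      omega
  refine ⟨⟨hwy, hby, fun j hj => hz (j+1) (by omega), ?_, ?_⟩, by omega, by omega⟩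
  · show ∑ t ∈ range N, t * x (t+1) = e0 - (e1 - i)
    omega
  · show ∑ t ∈ range N, x (t+1) = e1 - i
    omega

lemma cons_cond {k l N : ℕ} {b : ℕ → ℕ} {e0 e1 i : ℕ} (hl : 2 ≤ l) (hb : AdmB k l b)
    (hi : i ≤ b 0) {y : ℕ → ℕ}
    (hy : Pcond k l N (shiftB k l b i) (e0 - (e1 - i)) (e1 - i) y)
    (h1 : i ≤ e1) (h2 : e1 - i ≤ e0) :
    Pcond k l (N+1) b e0 e1 (consF i y) := by
  obtain ⟨hw, hbd, hz, hq, hs⟩ := hy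
  have hik : i ≤ k := hi.trans (hb.2 0 (by omega))
  have hsum : ∀ n, ∑ t ∈ range (n+1), consF i y t = (∑ t ∈ range n, y t) + i := by
    intro n
    rw [Finset.sum_range_succ' (consF i y) n]
    rfl
  have hwx : windowOK k l (consF i y) := by
    intro j
    cases j with
    | zero =>
      have hll : l - 1 + 1 = l := by omega
      have h3 := hsum (l-1)
      rw [hll] at h3
      simp only [Nat.zero_add]
      have h4 := hbd (l-2) (by omega)
      have h5 : l - 2 + 1 = l - 1 := by omega
      rw [h5] at h4
      have h6 : shiftB k l b i (l-2) = k - i := by unfold shiftB; rw [if_neg (by omega)]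
      omega
    | succ j =>
      have h3 : ∑ t ∈ range l, consF i y (j + 1 + t) = ∑ t ∈ range l, y (j + t) := by
        refine Finset.sum_congr rfl fun t _ => ?_
        rw [Nat.add_right_comm]
        rfl
      rw [h3]
      exact hw j
  have hbx : boundOK l b (consF i y) := by
    intro j hj
    cases j with
    | zero =>
      rw [Finset.sum_range_one]
      exact hi
    | succ j =>
      have key := hsum (j+1)
      have h3 := hbd j (by omega)
      have h4 : shiftB k l b i j = b (j+1) - i := by unfold shiftB; rw [if_pos (by omega)]
      have h5 : i ≤ b (j+1) := hi.trans (hb.1 0 (j+1) (Nat.zero_le _) hj)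
      omega
  have hzx : ∀ j, N + 1 ≤ j → consF i y j = 0 := by
    intro j hj
    cases j with
    | zero => omega
    | succ j => exact hz j (by omega)
  have hqx : ∑ t ∈ range (N+1), t * consF i y t
      = (∑ t ∈ range N, t * y t) + (∑ t ∈ range N, y t) := by
    have h1' := Finset.sum_range_succ' (fun t => t * consF i y t) N
    simp only [Nat.zero_mul, Nat.add_zero] at h1'
    rw [h1']
    have h2' : ∑ t ∈ range N, (t+1) * consF i y (t+1) = ∑ t ∈ range N, (t+1) * y t := rfl
    rw [h2', ← Finset.sum_add_distrib]
    exact Finset.sum_congr rfl fun t _ => by ring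
  have hsN := hsum N
  exact ⟨hwx, hbx, hzx, by omega, by omega⟩

lemma card_fiber (k l N : ℕ) (b : ℕ → ℕ) (e0 e1 i : ℕ) (hl : 2 ≤ l) (hb : AdmB k l b)
    (hi : i ≤ b 0) :
    Nat.card {x : ℕ → ℕ // Pcond k l (N+1) b e0 e1 x ∧ x 0 = i} =
      if i ≤ e1 ∧ e1 - i ≤ e0 then
        Nat.card {y : ℕ → ℕ // Pcond k l N (shiftB k l b i) (e0 - (e1 - i)) (e1 - i) y}
      else 0 := by
  have hcongr : Nat.card {x : ℕ → ℕ // Pcond k l (N+1) b e0 e1 x ∧ x 0 = i} =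
      Nat.card {y : ℕ → ℕ // Pcond k l N (shiftB k l b i) (e0 - (e1 - i)) (e1 - i) y ∧
        i ≤ e1 ∧ e1 - i ≤ e0} := by
    apply Nat.card_congr
    refine ⟨fun x => ⟨fun j => x.1 (j+1), tail_cond hl x.2.1 x.2.2⟩,
            fun y => ⟨consF i y.1, cons_cond hl hb hi y.2.1 y.2.2.1 y.2.2.2, rfl⟩,
            fun x => ?_, fun y => ?_⟩
    · apply Subtype.ext
      funext t
      cases t with
      | zero => exact x.2.2.symm
      | succ j => rfl
    · apply Subtype.ext
      rfl
  rw [hcongr]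
  by_cases hc : i ≤ e1 ∧ e1 - i ≤ e0
  · rw [if_pos hc]
    exact Nat.card_congr (Equiv.subtypeEquivRight fun y => by tauto)
  · rw [if_neg hc]
    haveI : IsEmpty {y : ℕ → ℕ // Pcond k l N (shiftB k l b i) (e0 - (e1 - i)) (e1 - i) y ∧
        i ≤ e1 ∧ e1 - i ≤ e0} := ⟨fun y => hc y.2.2⟩
    exact Nat.card_of_isEmpty

lemma chiN_zero (k l : ℕ) (b : ℕ → ℕ) : chiN k l 0 b = 1 := by
  ext e
  rw [coeff_chiN, MvPowerSeries.coeff_one]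
  by_cases he : e = 0
  · rw [if_pos he]
    subst he
    have h0 : ((0 : Fin 2 →₀ ℕ) : Fin 2 → ℕ) 0 = 0 := rfl
    have : Nat.card {x : ℕ → ℕ // Pcond k l 0 b ((0 : Fin 2 →₀ ℕ) 0) ((0 : Fin 2 →₀ ℕ) 1) x} = 1 := by
      rw [Nat.card_eq_one_iff_unique]
      constructor
      · constructor
        intro x y
        apply Subtype.ext
        funext t
        rw [x.2.2.2.1 t (Nat.zero_le _), y.2.2.2.1 t (Nat.zero_le _)]
      · exact ⟨⟨fun _ => 0, fun j => by simp, fun j hj => by simp, fun j hj => rfl,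
          by simp, by simp⟩⟩
    rw [this]
    simp
  · rw [if_neg he]
    haveI : IsEmpty {x : ℕ → ℕ // Pcond k l 0 b (e 0) (e 1) x} := by
      constructor
      rintro ⟨x, -, -, -, h4, h5⟩
      simp only [Finset.sum_range_zero] at h4 h5
      exact he (Finsupp.ext fun a => by fin_cases a <;> simp [← h4, ← h5])
    rw [Nat.card_of_isEmpty]
    simp

lemma shiftB_adm {k l : ℕ} (hl : 2 ≤ l) {b : ℕ → ℕ} (hb : AdmB k l b) (i : ℕ) :
    AdmB k l (shiftB k l b i) := by
  constructor
  · intro j j' hjj' hj'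
    unfold shiftB
    by_cases h1 : j + 1 ≤ l - 2 <;> by_cases h2 : j' + 1 ≤ l - 2
    · rw [if_pos h1, if_pos h2]
      exact Nat.sub_le_sub_right (hb.1 (j+1) (j'+1) (by omega) (by omega)) i
    · rw [if_pos h1, if_neg h2]
      exact Nat.sub_le_sub_right (hb.2 (j+1) (by omega)) i
    · omega
    · rw [if_neg h1, if_neg h2]
  · intro j hj
    unfold shiftB
    split
    · exact le_trans (Nat.sub_le _ _) (hb.2 (j+1) (by omega))
    · exact Nat.sub_le _ _

lemma chiN_succ (k l N : ℕ) (b : ℕ → ℕ) (hl : 2 ≤ l) (hb : AdmB k l b) :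
    chiN k l (N+1) b =
      ∑ i ∈ Finset.range (b 0 + 1), Zv ^ i * Sop (chiN k l N (shiftB k l b i)) := by
  ext e
  rw [map_sum, coeff_chiN]
  haveI : Finite {x : ℕ → ℕ // Pcond k l (N+1) b (e 0) (e 1) x} :=
    pcond_finite k l (N+1) (by omega) b (e 0) (e 1)
  have hfib : ∀ x : {x : ℕ → ℕ // Pcond k l (N+1) b (e 0) (e 1) x}, x.1 0 < b 0 + 1 := by
    intro x
    have h1 := x.2.2.1 0 (by omega)
    rw [Finset.sum_range_one] at h1
    omega
  rw [nat_card_fiber_sum (fun x => x.1 0) (b 0 + 1) hfib]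
  push_cast
  refine Finset.sum_congr rfl fun i hi => ?_
  have hib : i ≤ b 0 := by
    have := Finset.mem_range.1 hi; omega
  -- LHS
  have hL : Nat.card {a : {x : ℕ → ℕ // Pcond k l (N+1) b (e 0) (e 1) x} // a.1 0 = i}
      = Nat.card {x : ℕ → ℕ // Pcond k l (N+1) b (e 0) (e 1) x ∧ x 0 = i} :=
    Nat.card_congr (Equiv.subtypeSubtypeEquivSubtypeInter
      (Pcond k l (N+1) b (e 0) (e 1)) (fun x => x 0 = i))
  rw [hL, card_fiber k l N b (e 0) (e 1) i hl hb hib]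
  -- RHS
  have hZ : Zv = MvPowerSeries.X 1 := rfl
  rw [hZ, MvPowerSeries.X_pow_eq, MvPowerSeries.coeff_monomial_mul]
  have he'0 : (e - Finsupp.single (1 : Fin 2) i) (0 : Fin 2) = e 0 := by
    rw [Finsupp.tsub_apply, Finsupp.single_eq_of_ne (by decide), Nat.sub_zero]
  have he'1 : (e - Finsupp.single (1 : Fin 2) i) (1 : Fin 2) = e 1 - i := by
    rw [Finsupp.tsub_apply, Finsupp.single_eq_same]
  have hle : Finsupp.single (1 : Fin 2) i ≤ e ↔ i ≤ e 1 := Finsupp.single_le_iff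
  rw [coeff_Sop, coeff_chiN, he'0, he'1, idx2_0, idx2_1]
  by_cases h1 : i ≤ e 1
  · by_cases h2 : e 1 - i ≤ e 0
    · rw [if_pos ⟨h1, h2⟩, if_pos (hle.2 h1), if_pos h2, one_mul]
    · rw [if_neg (by tauto), if_pos (hle.2 h1), if_neg h2, one_mul]
      simp
  · rw [if_neg (by tauto), if_neg (fun h => h1 (hle.1 h))]
    simp

end Aux

/-- The family of characters `χ^{(N)}_{k,l;b}(q,z)` is the unique solution of the
recursion `χ^{(N+1)}_{k,l;(b_0,…,b_{l-2})}(q,z) = Σ_{i=0}^{b_0} z^i χ^{(N)}_{k,l;(b_1-i,…,b_{l-2}-i,k-i)}(q,qz)`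
with initial condition `χ^{(0)}_{k,l;b}(q,z) = 1` for all admissible boundary vectors `b`. -/
theorem stmt1 (k l : ℕ) (hk : 0 < k) (hl : 2 ≤ l)
    (F : ℕ → (ℕ → ℕ) → PS) :
    ((∀ b, AdmB k l b → F 0 b = 1) ∧
      (∀ N b, AdmB k l b →
        F (N + 1) b = ∑ i ∈ Finset.range (b 0 + 1), Zv ^ i * Sop (F N (shiftB k l b i)))) ↔
    (∀ b, AdmB k l b → ∀ N, F N b = chiN k l N b) := by
  constructor
  · rintro ⟨h0, hrec⟩ b hb N
    induction N generalizing b with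
    | zero => rw [h0 b hb, chiN_zero]
    | succ N ih =>
      rw [hrec N b hb, chiN_succ k l N b hl hb]
      exact Finset.sum_congr rfl fun i hi => by rw [ih (shiftB k l b i) (shiftB_adm hl hb i)]
  · intro h
    refine ⟨fun b hb => by rw [h b hb 0, chiN_zero], fun N b hb => ?_⟩
    rw [h b hb (N+1), chiN_succ k l N b hl hb]
    exact Finset.sum_congr rfl fun i hi => by
      rw [h (shiftB k l b i) (shiftB_adm hl hb i) N]
end

section
/- The maps M_a and M_b on Λ satisfy: M_a(ι_{i,j}) = ι_{i+1−δ_{ī,1}, j+1−δ_{j̄,1}} if (ī, j̄) ≠ (1, l), M_a(ι_{i,j}) = 0 if (ī, j̄) = (1, l), and M_b(ι_{i,j}) = ι_{i+1, j+1}, for all integers i, j. -/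
open Finset Filter MvPowerSeries

/-- Abstract form of `ι` in terms of the residues `p = ī`, `q = j̄`. -/
def Fio (l p q t : ℕ) : ℤ :=
  (if 2 ≤ p ∧ t = p - 2 then 1 else 0) - (if 2 ≤ q ∧ t = q - 2 then 1 else 0)
  + (if p ≤ q ∧ t = l - 1 then 1 else 0)

lemma iotaF (l : ℕ) (i j : ℤ) : iotaL l i j = Fio l (ibar l i) (ibar l j) := rfl

lemma ibar_bounds (l : ℕ) (hl : 1 ≤ l) (i : ℤ) : 1 ≤ ibar l i ∧ ibar l i ≤ l := by
  unfold ibar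
  have h0 : (0:ℤ) < (l:ℤ) := by exact_mod_cast hl
  have h1 : (0:ℤ) ≤ (i-1) % l := Int.emod_nonneg _ (by omega)
  have h2 : (i-1) % l < l := Int.emod_lt_of_pos _ h0
  omega

lemma ibar_succ (l : ℕ) (hl : 1 ≤ l) (i : ℤ) :
    ibar l (i+1) = if ibar l i = l then 1 else ibar l i + 1 := by
  unfold ibar
  have h0 : (0:ℤ) < (l:ℤ) := by exact_mod_cast hl
  have h1 : (0:ℤ) ≤ (i-1) % l := Int.emod_nonneg _ (by omega)
  have h2 : (i-1) % l < l := Int.emod_lt_of_pos _ h0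
  have key : (i + 1 - 1) % l = ((i-1) % l + 1) % l := by
    have hd := Int.mul_ediv_add_emod (i-1) (l:ℤ)
    conv_lhs => rw [show i + 1 - 1 = (i-1) % l + 1 + (l:ℤ) * ((i-1) / l) by linarith]
    rw [Int.add_mul_emod_self_left]
  by_cases hc : (i-1) % l + 1 = (l:ℤ)
  · rw [key, hc, Int.emod_self]
    split_ifs with h <;> omega
  · have h3 : ((i-1) % l + 1) % l = (i-1) % l + 1 := Int.emod_eq_of_lt (by omega) (by omega)
    rw [key, h3]
    split_ifs with h <;> omega

lemma sum_ind (n a : ℕ) (c : Prop) [Decidable c] :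
    ∑ t ∈ Finset.range n, (if c ∧ t = a then (1:ℤ) else 0) =
      if c ∧ a < n then 1 else 0 := by
  by_cases hc : c
  · simp only [hc, true_and]
    by_cases ha : a < n
    · rw [if_pos ha, Finset.sum_ite_eq' (Finset.range n) a fun _ => (1:ℤ)]
      simp [Finset.mem_range, ha]
    · rw [if_neg ha, Finset.sum_eq_zero]
      intro x hx
      rw [if_neg]
      intro hxa
      exact ha (hxa ▸ Finset.mem_range.mp hx)
  · simp [hc]

lemma sumF (l p q : ℕ) (hl : 2 ≤ l) (hpl : p ≤ l) (hql : q ≤ l) :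
    ∑ t ∈ Finset.range (l-1), Fio l p q t =
      (if 2 ≤ p then 1 else 0) - (if 2 ≤ q then 1 else 0) := by
  simp only [Fio]
  rw [Finset.sum_add_distrib, Finset.sum_sub_distrib, sum_ind, sum_ind, sum_ind]
  omega

lemma FioA (l p q : ℕ) (hl : 2 ≤ l) (hpl : p ≤ l) (hql : q ≤ l) :
    Fio l p q (l-2) = (if p = l then 1 else 0) - (if q = l then 1 else 0) := by
  simp only [Fio]; omega

lemma FioB (l p q : ℕ) (hl : 2 ≤ l) (hpl : p ≤ l) (hql : q ≤ l) :
    Fio l p q (l-1) = if p ≤ q then 1 else 0 := by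
  simp only [Fio, and_true]; omega

lemma bigC (l p' t : ℕ) (hl : 2 ≤ l) (hp'l : p' ≤ l)
    (h2 : ¬ t = l - 1) (h4 : ¬ t < l - 1) :
    (if 2 ≤ p' ∧ t = p' - 2 then (1:ℤ) else 0) = 0 := by
  omega

lemma midA (l p p' t : ℕ) (hl : 2 ≤ l) (hp1 : 1 ≤ p) (hpl : p ≤ l)
    (Hp : (p = 1 ∧ p' = 1) ∨ (p = l ∧ p' = 1) ∨ (2 ≤ p ∧ p + 1 ≤ l ∧ p' = p + 1))
    (h1 : ¬ t = 0) (h3 : t < l - 1) :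
    (if 2 ≤ p ∧ t - 1 = p - 2 then (1:ℤ) else 0) = if 2 ≤ p' ∧ t = p' - 2 then 1 else 0 := by
  omega

lemma zeroA (l p p' : ℕ) (hl : 2 ≤ l) (hp1 : 1 ≤ p) (hpl : p ≤ l)
    (Hp : (p = 1 ∧ p' = 1) ∨ (p = l ∧ p' = 1) ∨ (2 ≤ p ∧ p + 1 ≤ l ∧ p' = p + 1)) :
    (if 2 ≤ p' ∧ 0 = p' - 2 then (1:ℤ) else 0) = 0 := by
  omega

lemma keyA (l p q p' q' : ℕ) (hl : 2 ≤ l) (hp1 : 1 ≤ p) (hpl : p ≤ l)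
    (hq1 : 1 ≤ q) (hql : q ≤ l) (h : ¬(p = 1 ∧ q = l))
    (Hp : (p = 1 ∧ p' = 1) ∨ (p = l ∧ p' = 1) ∨ (2 ≤ p ∧ p + 1 ≤ l ∧ p' = p + 1))
    (Hq : (q = 1 ∧ q' = 1) ∨ (q = l ∧ q' = 1) ∨ (2 ≤ q ∧ q + 1 ≤ l ∧ q' = q + 1)) :
    Ma l (Fio l p q) = Fio l p' q' := by
  have hp'l : p' ≤ l := by omega
  have hq'l : q' ≤ l := by omega
  funext t
  simp only [Ma]
  split_ifs with h1 h2 h3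
  · subst h1
    simp only [Fio]
    rw [zeroA l p p' hl hp1 hpl Hp, zeroA l q q' hl hq1 hql Hq, if_neg (by omega)]
    ring
  · subst h2
    rw [FioA l p q hl hpl hql, FioB l p q hl hpl hql, FioB l p' q' hl hp'l hq'l]
    omega
  · simp only [Fio]
    rw [midA l p p' t hl hp1 hpl Hp h1 h3, midA l q q' t hl hq1 hql Hq h1 h3,
      if_neg (c := p ≤ q ∧ t - 1 = l - 1) (by omega),
      if_neg (c := p' ≤ q' ∧ t = l - 1) (by omega)]
  · simp only [Fio]
    rw [bigC l p' t hl hp'l h2 h3, bigC l q' t hl hq'l h2 h3, if_neg (by omega)]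
    ring

lemma keyA0 (l p q : ℕ) (hl : 2 ≤ l) (hp : p = 1) (hq : q = l) :
    Ma l (Fio l p q) = 0 := by
  have hpl : p ≤ l := by omega
  have hql : q ≤ l := by omega
  funext t
  simp only [Ma, Pi.zero_apply]
  split_ifs with h1 h2 h3
  · rfl
  · rw [FioA l p q hl hpl hql, FioB l p q hl hpl hql]
    omega
  · simp only [Fio]
    omega
  · rfl

lemma midB (l p p' t : ℕ) (hl : 2 ≤ l) (hp1 : 1 ≤ p) (hpl : p ≤ l)
    (Hp : (p = l ∧ p' = 1) ∨ (p + 1 ≤ l ∧ p' = p + 1))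
    (h1 : ¬ t = 0) (h3 : t < l - 1) :
    (if 2 ≤ p ∧ t - 1 = p - 2 then (1:ℤ) else 0) = if 2 ≤ p' ∧ t = p' - 2 then 1 else 0 := by
  omega

lemma keyB (l p q p' q' : ℕ) (hl : 2 ≤ l) (hp1 : 1 ≤ p) (hpl : p ≤ l)
    (hq1 : 1 ≤ q) (hql : q ≤ l)
    (Hp : (p = l ∧ p' = 1) ∨ (p + 1 ≤ l ∧ p' = p + 1))
    (Hq : (q = l ∧ q' = 1) ∨ (q + 1 ≤ l ∧ q' = q + 1)) :
    Mb l (Fio l p q) = Fio l p' q' := by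
  have hp'l : p' ≤ l := by omega
  have hq'l : q' ≤ l := by omega
  have hsum := sumF l p q hl hpl hql
  funext t
  simp only [Mb]
  rw [hsum]
  by_cases h1 : t = 0
  · rw [if_pos h1]
    subst h1
    simp only [Fio]
    omega
  · rw [if_neg h1]
    by_cases h2 : t = l - 1
    · rw [if_pos h2]
      subst h2
      rw [FioA l p q hl hpl hql, FioB l p q hl hpl hql, FioB l p' q' hl hp'l hq'l]
      omega
    · rw [if_neg h2]
      by_cases h3 : t < l - 1
      · rw [if_pos h3]
        simp only [Fio]
        rw [midB l p p' t hl hp1 hpl Hp h1 h3, midB l q q' t hl hq1 hql Hq h1 h3,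
          if_neg (c := p ≤ q ∧ t - 1 = l - 1) (by omega),
          if_neg (c := p' ≤ q' ∧ t = l - 1) (by omega)]
      · rw [if_neg h3]
        simp only [Fio]
        rw [bigC l p' t hl hp'l h2 h3, bigC l q' t hl hq'l h2 h3, if_neg (by omega)]
        ring

lemma succ_disj (l p p' : ℕ) (hl : 2 ≤ l) (hp1 : 1 ≤ p) (hpl : p ≤ l)
    (hs : p' = if p = l then 1 else p + 1) :
    (p = l ∧ p' = 1) ∨ (p + 1 ≤ l ∧ p' = p + 1) := by
  split_ifs at hs <;> omega

lemma succ_disjA (l p p' : ℕ) (hl : 2 ≤ l) (hp1 : 1 ≤ p) (hpl : p ≤ l) (hne : ¬ p = 1)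
    (hs : p' = if p = l then 1 else p + 1) :
    (p = 1 ∧ p' = 1) ∨ (p = l ∧ p' = 1) ∨ (2 ≤ p ∧ p + 1 ≤ l ∧ p' = p + 1) := by
  split_ifs at hs <;> omega

/-- Lemma on the action of `M_a`, `M_b` on the vectors `ι_{i,j} ∈ Λ`:
`M_a(ι_{i,j}) = ι_{i+1-δ_{ī,1}, j+1-δ_{j̄,1}}` if `(ī,j̄) ≠ (1,l)`,
`M_a(ι_{i,j}) = 0` if `(ī,j̄) = (1,l)`, and `M_b(ι_{i,j}) = ι_{i+1,j+1}`. -/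
theorem stmt9 (l : ℕ) (hl : 2 ≤ l) (i j : ℤ) :
    (¬(ibar l i = 1 ∧ ibar l j = l) →
      Ma l (iotaL l i j) =
        iotaL l (i + 1 - if ibar l i = 1 then 1 else 0)
          (j + 1 - if ibar l j = 1 then 1 else 0)) ∧
    ((ibar l i = 1 ∧ ibar l j = l) → Ma l (iotaL l i j) = 0) ∧
    Mb l (iotaL l i j) = iotaL l (i + 1) (j + 1) := by
  have hl1 : 1 ≤ l := by omega
  obtain ⟨hp1, hpl⟩ := ibar_bounds l hl1 i
  obtain ⟨hq1, hql⟩ := ibar_bounds l hl1 j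
  have hsi := ibar_succ l hl1 i
  have hsj := ibar_succ l hl1 j
  refine ⟨?_, ?_, ?_⟩
  · intro h
    by_cases hpi : ibar l i = 1 <;> by_cases hqj : ibar l j = 1
    · rw [if_pos hpi, if_pos hqj, show i + 1 - (1:ℤ) = i by ring,
        show j + 1 - (1:ℤ) = j by ring]
      simp only [iotaF]
      exact keyA l _ _ _ _ hl hp1 hpl hq1 hql h (Or.inl ⟨hpi, hpi⟩) (Or.inl ⟨hqj, hqj⟩)
    · rw [if_pos hpi, if_neg hqj, show i + 1 - (1:ℤ) = i by ring,
        show j + 1 - (0:ℤ) = j + 1 by ring]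
      simp only [iotaF]
      exact keyA l _ _ _ _ hl hp1 hpl hq1 hql h (Or.inl ⟨hpi, hpi⟩)
        (succ_disjA l _ _ hl hq1 hql hqj hsj)
    · rw [if_neg hpi, if_pos hqj, show i + 1 - (0:ℤ) = i + 1 by ring,
        show j + 1 - (1:ℤ) = j by ring]
      simp only [iotaF]
      exact keyA l _ _ _ _ hl hp1 hpl hq1 hql h
        (succ_disjA l _ _ hl hp1 hpl hpi hsi) (Or.inl ⟨hqj, hqj⟩)
    · rw [if_neg hpi, if_neg hqj, show i + 1 - (0:ℤ) = i + 1 by ring,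
        show j + 1 - (0:ℤ) = j + 1 by ring]
      simp only [iotaF]
      exact keyA l _ _ _ _ hl hp1 hpl hq1 hql h
        (succ_disjA l _ _ hl hp1 hpl hpi hsi) (succ_disjA l _ _ hl hq1 hql hqj hsj)
  · intro h
    rw [iotaF]
    exact keyA0 l _ _ hl h.1 h.2
  · simp only [iotaF]
    exact keyB l _ _ _ _ hl hp1 hpl hq1 hql
      (succ_disj l _ _ hl hp1 hpl hsi) (succ_disj l _ _ hl hq1 hql hsj)
end
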